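/- Let S be a string of length n and let (X,Y) be a 2-cover of S with X = S[1..p] a prefix of S and Y = S[s..n] a suffix of S. Define X_trim = X if X is not highly periodic, and X_trim = X[1..2ρ + (p mod ρ)] where ρ = per(X) if X is highly ρ-periodic; define Y_trim = Y if Y is not highly periodic, and Y_trim = Y[|Y| − 2ρ' − (|Y| mod ρ') + 1..|Y|] where ρ' = per(Y) if Y is highly ρ'-periodic. Then (X_trim, Y_trim) is a 2-cover of S, and neither X_trim nor Y_trim is highly periodic. -/

import Mathlib

variable {α : Type*}

/-- `sub S i j` is the substring `S[i..j]` (1-indexed, inclusive endpoints). -/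
def sub (S : List α) (i j : ℕ) : List α := (S.take j).drop (i - 1)

/-- `ρ` is a period of `T`: `1 ≤ ρ` and `T[i] = T[i+ρ]` for all valid `i`. -/
def IsPeriod (T : List α) (ρ : ℕ) : Prop :=
  1 ≤ ρ ∧ ∀ i : ℕ, i + ρ < T.length → T[i]? = T[i + ρ]?

/-- The minimal period of `T`. -/
noncomputable def per (T : List α) : ℕ := sInf {ρ : ℕ | IsPeriod T ρ}

/-- The substring `X` covers index `i` of `S`. -/
def Covers (S X : List α) (i : ℕ) : Prop :=
  ∃ j₁ j₂ : ℕ, 1 ≤ j₁ ∧ j₁ ≤ i ∧ i ≤ j₂ ∧ j₂ ≤ S.length ∧ sub S j₁ j₂ = X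

/-- `(X, Y)` is a 2-cover of `S`: every index of `S` is covered by `X` or `Y`. -/
def TwoCover (S X Y : List α) : Prop :=
  ∀ i : ℕ, 1 ≤ i → i ≤ S.length → Covers S X i ∨ Covers S Y i

/-- `T` is highly periodic: `|T| ≥ 3·per T`. -/
def HighlyPeriodic (T : List α) : Prop := 3 * per T ≤ T.length

noncomputable instance (T : List α) : Decidable (HighlyPeriodic T) :=
  inferInstanceAs (Decidable (3 * per T ≤ T.length))

lemma isPeriod_big (T : List α) : IsPeriod T (T.length + 1) :=
  ⟨Nat.succ_le_succ (Nat.zero_le _), fun i h => by omega⟩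

lemma per_isPeriod (T : List α) : IsPeriod T (per T) := by
  have : per T ∈ {ρ : ℕ | IsPeriod T ρ} :=
    Nat.sInf_mem (⟨T.length + 1, isPeriod_big T⟩ : Set.Nonempty {ρ : ℕ | IsPeriod T ρ})
  exact this

lemma per_le {T : List α} {q : ℕ} (h : IsPeriod T q) : per T ≤ q :=
  Nat.sInf_le h

lemma one_le_per (T : List α) : 1 ≤ per T := (per_isPeriod T).1

lemma isPeriod_iterate {T : List α} {ρ : ℕ} (h : IsPeriod T ρ) :
    ∀ k i : ℕ, i + k * ρ < T.length → T[i]? = T[i + k * ρ]? := by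
  intro k
  induction k with
  | zero => simp
  | succ k ih =>
    intro i hi
    have h1 : i + k * ρ < T.length := by nlinarith [h.1]
    rw [ih i h1]
    have := h.2 (i + k * ρ) (by ring_nf; ring_nf at hi; omega)
    rw [this]; ring_nf

lemma isPeriod_take {T : List α} {ρ : ℕ} (h : IsPeriod T ρ) (L : ℕ) :
    IsPeriod (T.take L) ρ := by
  refine ⟨h.1, fun i hi => ?_⟩
  rw [List.length_take] at hi
  have h1 : i + ρ < L := lt_of_lt_of_le hi (min_le_left _ _)
  have h2 : i + ρ < T.length := lt_of_lt_of_le hi (min_le_right _ _)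
  rw [List.getElem?_take, List.getElem?_take, if_pos (by omega), if_pos h1]
  exact h.2 i h2

lemma period_extend {T : List α} {ρ q L : ℕ} (hρ : IsPeriod T ρ)
    (hq : IsPeriod (T.take L) q) (hL : ρ + q ≤ L) (hLn : L ≤ T.length) :
    IsPeriod T q := by
  refine ⟨hq.1, fun i => ?_⟩
  induction i using Nat.strong_induction_on with
  | _ i ih =>
    intro hi
    by_cases hcase : i + q < L
    · have := hq.2 i (by rw [List.length_take]; omega)
      rwa [List.getElem?_take, List.getElem?_take, if_pos (by omega), if_pos hcase] at this
    · have hρ1 := hρ.1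
      obtain ⟨j, rfl⟩ : ∃ j, i = j + ρ := ⟨i - ρ, by omega⟩
      have e1 : T[j]? = T[j + ρ]? := hρ.2 j (by omega)
      have e2 : T[j + q]? = T[j + q + ρ]? := hρ.2 (j + q) (by omega)
      have e3 : T[j]? = T[j + q]? := ih j (by omega) (by omega)
      rw [← e1, e3, e2]; congr 1; omega

lemma drop_mul_take {T : List α} {ρ k L : ℕ} (h : IsPeriod T ρ)
    (hkL : k * ρ + L ≤ T.length) : (T.drop (k * ρ)).take L = T.take L := by
  apply List.ext_getElem?
  intro t
  rw [List.getElem?_take, List.getElem?_take]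
  split
  · next ht =>
    rw [List.getElem?_drop]
    have := isPeriod_iterate h k t (by omega)
    rw [this]; congr 1; omega
  · rfl

lemma hp_facts {T : List α} (h : HighlyPeriodic T) :
    1 ≤ per T ∧ T.length % per T < per T ∧
      (T.length / per T - 2) * per T = T.length - (2 * per T + T.length % per T) ∧
      3 ≤ T.length / per T := by
  have hρ1 : 1 ≤ per T := one_le_per T
  have h3 : 3 * per T ≤ T.length := h
  have hr : T.length % per T < per T := Nat.mod_lt _ hρ1
  have hQ3 : 3 ≤ T.length / per T := (Nat.le_div_iff_mul_le hρ1).2 (by omega)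
  have hQR : per T * (T.length / per T) + T.length % per T = T.length :=
    Nat.div_add_mod _ _
  have hcomm : (T.length / per T) * per T = per T * (T.length / per T) := mul_comm _ _
  have hsum : (T.length / per T - 2 + 2) * per T = (T.length / per T) * per T := by
    rw [Nat.sub_add_cancel (by omega)]
  rw [add_mul] at hsum
  refine ⟨hρ1, hr, ?_, hQ3⟩
  omega

lemma take_trim_not_hp {T : List α} (h : HighlyPeriodic T) :
    ¬ HighlyPeriodic (T.take (2 * per T + T.length % per T)) := by
  obtain ⟨hρ1, hr, _, _⟩ := hp_facts h
  have h3 : 3 * per T ≤ T.length := h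
  set ρ := per T
  set L := 2 * ρ + T.length % ρ with hLdef
  have hLlen : L ≤ T.length := by omega
  intro hhp
  have hlen : (T.take L).length = L := by rw [List.length_take]; omega
  have hhp' : 3 * per (T.take L) ≤ L := by
    have := hhp
    unfold HighlyPeriodic at this
    rwa [hlen] at this
  have hq : IsPeriod (T.take L) (per (T.take L)) := per_isPeriod _
  have hq1 : 1 ≤ per (T.take L) := one_le_per _
  have hqρ : per (T.take L) < ρ := by omega
  have hTq : IsPeriod T (per (T.take L)) :=
    period_extend (per_isPeriod T) hq (by omega) hLlen
  have := per_le hTq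
  omega

lemma covers_take {S T : List α} {i : ℕ} (h : HighlyPeriodic T)
    (hc : Covers S T i) : Covers S (T.take (2 * per T + T.length % per T)) i := by
  obtain ⟨j₁, j₂, h1, h2, h3, h4, h5⟩ := hc
  obtain ⟨hρ1, hr, hKmul, hQ3⟩ := hp_facts h
  have h3ρ : 3 * per T ≤ T.length := h
  set ρ := per T
  set n := T.length with hn
  set L := 2 * ρ + n % ρ with hLdef
  have hLn : L ≤ n := by omega
  -- length of the occurrence
  have hlen5 : n = j₂ - j₁ + 1 := by
    have := congrArg List.length h5
    simp only [sub, List.length_drop, List.length_take] at this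
    omega
  set d := i - j₁ with hd
  set k := min (d / ρ) (n / ρ - 2) with hk
  have hkQ : k * ρ ≤ (n / ρ - 2) * ρ :=
    Nat.mul_le_mul_right _ (min_le_right _ _)
  have hkL : k * ρ + L ≤ n := by omega
  have hk1 : k * ρ ≤ d :=
    le_trans (Nat.mul_le_mul_right _ (min_le_left _ _)) (Nat.div_mul_le_self _ _)
  have hk2 : d < k * ρ + L := by
    rcases le_total (d / ρ) (n / ρ - 2) with hle | hle
    · have hkeq : k = d / ρ := min_eq_left hle
      have hdm : ρ * (d / ρ) + d % ρ = d := Nat.div_add_mod _ _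
      have hmod : d % ρ < ρ := Nat.mod_lt _ hρ1
      have hcm : k * ρ = ρ * (d / ρ) := by rw [hkeq, mul_comm]
      omega
    · have hkeq : k = n / ρ - 2 := min_eq_right hle
      have : k * ρ = n - L := by rw [hkeq]; exact hKmul
      omega
  -- the occurrence of the trimmed prefix
  refine ⟨j₁ + k * ρ, j₁ + k * ρ + L - 1, by omega, by omega, by omega, by omega, ?_⟩
  -- now the substring equality
  have hq5 : (List.drop (j₁ - 1) S).take (j₂ - (j₁ - 1)) = T := by
    rw [← List.drop_take]; exact h5
  have hTD : (List.drop (j₁ - 1) S).take n = T := by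
    have e : (List.drop (j₁ - 1) S).take n
        = ((List.drop (j₁ - 1) S).take (j₂ - (j₁ - 1))).take n := by
      rw [List.take_take, min_eq_left (by omega)]
    rw [e, hq5]
    exact List.take_length
  have step1 : sub S (j₁ + k * ρ) (j₁ + k * ρ + L - 1)
      = ((S.drop (j₁ - 1)).drop (k * ρ)).take L := by
    show (S.take (j₁ + k * ρ + L - 1)).drop (j₁ + k * ρ - 1) = _
    rw [List.drop_take, List.drop_drop]
    congr 1
    · omega
    · congr 1; omega
  have step2 : ((S.drop (j₁ - 1)).drop (k * ρ)).take L = (T.drop (k * ρ)).take L := by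
    rw [← hTD, List.drop_take, List.take_take, min_eq_left (by omega)]
  rw [step1, step2]
  exact drop_mul_take (per_isPeriod T) (by omega)

lemma hp_drop_eq_take {T : List α} (h : HighlyPeriodic T) :
    T.drop (T.length - (2 * per T + T.length % per T))
      = T.take (2 * per T + T.length % per T) := by
  obtain ⟨hρ1, hr, hKmul, hQ3⟩ := hp_facts h
  have h3ρ : 3 * per T ≤ T.length := h
  set ρ := per T
  set n := T.length with hn
  set L := 2 * ρ + n % ρ with hLdef
  have hnL : n - L = (n / ρ - 2) * ρ := hKmul.symm
  have hfull : T.drop (n - L) = (T.drop (n - L)).take L := by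
    rw [List.take_of_length_le]
    rw [List.length_drop]
    omega
  rw [hfull, hnL]
  exact drop_mul_take (per_isPeriod T) (by omega)

/-- Trimming a prefix-suffix 2-cover: if `(X,Y)` is a 2-cover of `S` with `X`
a prefix and `Y` a suffix, replacing a highly `ρ`-periodic `X` by its prefix
of length `2ρ + (|X| mod ρ)` and a highly `ρ'`-periodic `Y` by its suffix of
length `2ρ' + (|Y| mod ρ')` yields a 2-cover whose parts are not highly
periodic. -/
theorem stmt17 (S : List α) (n p s : ℕ) (hn : S.length = n)
    (hp1 : 1 ≤ p) (hpn : p ≤ n) (hs1 : 1 ≤ s) (hsn : s ≤ n)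
    (X Y Xt Yt : List α) (hX : X = S.take p) (hY : Y = S.drop (s - 1))
    (hcov : TwoCover S X Y)
    (hXt : Xt = if HighlyPeriodic X
      then X.take (2 * per X + X.length % per X) else X)
    (hYt : Yt = if HighlyPeriodic Y
      then Y.drop (Y.length - (2 * per Y + Y.length % per Y)) else Y) :
    TwoCover S Xt Yt ∧ ¬ HighlyPeriodic Xt ∧ ¬ HighlyPeriodic Yt := by
  have hXne : ∀ i, Covers S X i → Covers S Xt i := by
    intro i hc
    rw [hXt]
    split
    · exact covers_take ‹_› hc
    · exact hc
  have hYne : ∀ i, Covers S Y i → Covers S Yt i := by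
    intro i hc
    rw [hYt]
    split
    · next hhp => rw [hp_drop_eq_take hhp]; exact covers_take hhp hc
    · exact hc
  refine ⟨fun i h1 h2 => (hcov i h1 h2).imp (hXne i) (hYne i), ?_, ?_⟩
  · rw [hXt]
    split
    · exact take_trim_not_hp ‹_›
    · assumption
  · rw [hYt]
    split
    · next hhp => rw [hp_drop_eq_take hhp]; exact take_trim_not_hp hhp
    · assumption
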